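/- Suppose X is spread out and irreducible. Then X is π-irreducible and π₁-irreducible, where π₁ is the left Haar measure defined by π₁(A) = π(A⁻¹); moreover, π (equivalently π₁) is a maximal irreducibility measure for X: every nonzero σ-finite Borel measure μ on E such that X is μ-irreducible is absolutely continuous with respect to π. -/

import Mathlib

open MeasureTheory ENNReal Pointwise

set_option linter.unusedSectionVars false
set_option maxHeartbeats 1000000

noncomputable section

/-- Convolution of two Borel measures on a group. -/
def mconv {E : Type*} [Monoid E] [MeasurableSpace E] (μ ν : Measure E) : Measure E :=
  (μ.prod ν).map (fun p => p.1 * p.2)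

/-- `n`-fold convolution power of `v`, with `convPow v 0 = δ₁`. -/
def convPow {E : Type*} [Monoid E] [MeasurableSpace E] (v : Measure E) : ℕ → Measure E
  | 0 => Measure.dirac 1
  | n + 1 => mconv (convPow v n) v

/-- The (closed) support of a measure on a topological space. -/
def msupport {E : Type*} [TopologicalSpace E] [MeasurableSpace E] (v : Measure E) : Set E :=
  {x | ∀ U : Set E, IsOpen U → x ∈ U → 0 < v U}

/-- The random walk with law `v` is irreducible: the smallest closed subsemigroup of `E`
containing the support of `v` is `E` itself. -/
def IsIrreducibleWalk {E : Type*} [TopologicalSpace E] [Monoid E] [MeasurableSpace E]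
    (v : Measure E) : Prop :=
  ∀ T : Set E, IsClosed T → (∀ a ∈ T, ∀ b ∈ T, a * b ∈ T) → msupport v ⊆ T → T = Set.univ

/-- The random walk with law `v` is `μ`-irreducible: for every `x` and every Borel set `A` of
positive `μ`-measure, some `n`-step transition probability `p(n,x,A) = v^{*n}(x⁻¹A)` is positive. -/
def IsMeasIrreducible {E : Type*} [TopologicalSpace E] [Monoid E] [MeasurableSpace E]
    (μ v : Measure E) : Prop :=
  ∀ x : E, ∀ A : Set E, MeasurableSet A → 0 < μ A →
    ∃ n : ℕ, 1 ≤ n ∧ 0 < convPow v n {y | x * y ∈ A}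

section Aux

variable {E : Type*} [TopologicalSpace E] [Group E] [IsTopologicalGroup E]
    [LocallyCompactSpace E] [SecondCountableTopology E]
    [MeasurableSpace E] [BorelSpace E]

lemma mul2_measurable : Measurable fun p : E × E => p.1 * p.2 := measurable_mul

instance convPow_isProbabilityMeasure (v : Measure E) [IsProbabilityMeasure v] (n : ℕ) :
    IsProbabilityMeasure (convPow v n) := by
  induction n with
  | zero => exact inferInstanceAs (IsProbabilityMeasure (Measure.dirac (1 : E)))
  | succ n ih =>
    haveI := ih
    exact inferInstanceAs (IsProbabilityMeasure ((convPow v n).mconv v))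

instance mconv_sfinite (μ ν : Measure E) [SFinite μ] [SFinite ν] : SFinite (mconv μ ν) :=
  inferInstanceAs (SFinite (μ.mconv ν))

lemma mconv_apply (μ ν : Measure E) [SFinite ν] {B : Set E} (hB : MeasurableSet B) :
    mconv μ ν B = ∫⁻ y, ν {b | y * b ∈ B} ∂μ := by
  rw [mconv, Measure.map_apply mul2_measurable hB, Measure.prod_apply (mul2_measurable hB)]
  rfl

lemma mconv_apply_symm (μ ν : Measure E) [SFinite μ] [SFinite ν] {B : Set E}
    (hB : MeasurableSet B) :
    mconv μ ν B = ∫⁻ z, μ {y | y * z ∈ B} ∂ν := by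
  rw [mconv, Measure.map_apply mul2_measurable hB, Measure.prod_apply_symm (mul2_measurable hB)]
  rfl

lemma measurable_mconv_integrand (ν : Measure E) [SFinite ν] {B : Set E} (hB : MeasurableSet B) :
    Measurable fun y : E => ν {b | y * b ∈ B} := by
  have h : MeasurableSet {p : E × E | p.1 * p.2 ∈ B} := mul2_measurable hB
  exact measurable_measure_prodMk_left h

lemma mconv_assoc (μ ν ξ : Measure E) [SFinite μ] [SFinite ν] [SFinite ξ] :
    mconv (mconv μ ν) ξ = mconv μ (mconv ν ξ) := by
  ext B hB
  have hmeas : Measurable fun z : E => ξ {b | z * b ∈ B} := measurable_mconv_integrand ξ hB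
  rw [mconv_apply _ _ hB, mconv_apply _ _ hB, mconv, lintegral_map hmeas mul2_measurable,
    lintegral_prod _ (by exact (hmeas.comp mul2_measurable).aemeasurable)]
  refine lintegral_congr fun a => ?_
  rw [mconv_apply ν ξ (show MeasurableSet {b : E | a * b ∈ B} from measurable_const_mul a hB)]
  refine lintegral_congr fun b => ?_
  congr 1
  ext c
  simp [mul_assoc]

lemma convPow_succ (v : Measure E) (n : ℕ) : convPow v (n + 1) = mconv (convPow v n) v := rfl

lemma convPow_add (v : Measure E) [IsProbabilityMeasure v] (m n : ℕ) :
    convPow v (m + n) = mconv (convPow v m) (convPow v n) := by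
  induction n with
  | zero =>
    show convPow v m = mconv (convPow v m) (Measure.dirac 1)
    exact (Measure.mconv_dirac_one (convPow v m)).symm
  | succ n ih =>
    show convPow v (m + n + 1) = _
    rw [convPow_succ, ih, mconv_assoc]
    rfl

lemma prod_le_mconv (μ ν : Measure E) [SFinite ν] {O O₁ O₂ : Set E} (hO : MeasurableSet O)
    (h : ∀ a ∈ O₁, ∀ b ∈ O₂, a * b ∈ O) :
    μ O₁ * ν O₂ ≤ mconv μ ν O := by
  rw [mconv, Measure.map_apply mul2_measurable hO]
  calc μ O₁ * ν O₂ = (μ.prod ν) (O₁ ×ˢ O₂) := (Measure.prod_prod _ _).symm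
    _ ≤ _ := measure_mono (fun p hp => h _ hp.1 _ hp.2)

lemma mconv_mono (μ μ' ν ν' : Measure E) [SFinite ν] [SFinite ν'] (hμ : μ ≤ μ') (hν : ν ≤ ν')
    {B : Set E} (hB : MeasurableSet B) : mconv μ ν B ≤ mconv μ' ν' B := by
  rw [mconv_apply _ _ hB, mconv_apply _ _ hB]
  exact lintegral_mono' hμ fun y => Measure.le_iff'.1 hν _

/-- reachability of open sets from irreducibility -/
lemma reach_open (v : Measure E) [IsProbabilityMeasure v] (hirr : IsIrreducibleWalk v)
    {O : Set E} (hO : IsOpen O) (hne : O.Nonempty) :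
    ∃ n : ℕ, 1 ≤ n ∧ 0 < convPow v n O := by
  set T : Set E := {s | ∀ U : Set E, IsOpen U → s ∈ U → ∃ n : ℕ, 1 ≤ n ∧ 0 < convPow v n U}
    with hTdef
  have hclosed : IsClosed T := by
    rw [← isOpen_compl_iff, isOpen_iff_forall_mem_open]
    intro s hs
    simp only [hTdef, Set.mem_compl_iff, Set.mem_setOf_eq, not_forall] at hs
    obtain ⟨U, hUopen, hsU, hUnot⟩ := hs
    refine ⟨U, fun t htU ht => ?_, hUopen, hsU⟩
    exact hUnot (ht U hUopen htU)
  have hmul : ∀ a ∈ T, ∀ b ∈ T, a * b ∈ T := by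
    intro a ha b hb U hUopen hab
    obtain ⟨O₁, O₂, h₁, h₂, ha₁, hb₂, hsub⟩ :=
      isOpen_prod_iff.1 (hUopen.preimage (continuous_mul (M := E))) a b hab
    obtain ⟨n, hn1, hn⟩ := ha O₁ h₁ ha₁
    obtain ⟨m, hm1, hm⟩ := hb O₂ h₂ hb₂
    refine ⟨n + m, le_trans hn1 (Nat.le_add_right _ _), ?_⟩
    rw [convPow_add]
    refine lt_of_lt_of_le (ENNReal.mul_pos hn.ne' hm.ne')
      (prod_le_mconv _ _ (O₁ := O₁) (O₂ := O₂) hUopen.measurableSet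
        fun x hx y hy => hsub (Set.mk_mem_prod hx hy))
  have hsupp : msupport v ⊆ T := by
    intro s hs U hUopen hsU
    refine ⟨1, le_refl _, ?_⟩
    show 0 < mconv (Measure.dirac 1) v U
    rw [show mconv (Measure.dirac 1) v = (Measure.dirac 1).mconv v from rfl,
      Measure.dirac_one_mconv]
    exact hs U hUopen hsU
  have := hirr T hclosed hmul hsupp
  obtain ⟨s, hsO⟩ := hne
  have hsT : s ∈ T := this ▸ Set.mem_univ s
  exact hsT O hO hsO

lemma inv_map_eq (π : Measure E) : π.map (⇑(Homeomorph.inv E)) = π.inv := rfl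

lemma qi (π : Measure E) (hπ0 : π ≠ 0) (hπreg : π.Regular) (hπinv : π.IsMulRightInvariant)
    (g : E) {C : Set E} (hC : MeasurableSet C) (hpos : 0 < π C) :
    0 < π {w | g * w ∈ C} := by
  haveI := hπreg
  haveI := hπinv
  haveI : SigmaFinite π := inferInstance
  haveI : π.inv.Regular := inv_map_eq π ▸ hπreg.map (Homeomorph.inv E)
  haveI : NeZero π.inv := ⟨by
    intro h
    apply hπ0
    have h1 : π.inv Set.univ = 0 := by rw [h]; rfl
    rw [Measure.inv_apply, Set.inv_univ] at h1
    exact Measure.measure_univ_eq_zero.1 h1⟩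
  haveI : Measure.IsHaarMeasure π.inv := ⟨⟩
  set φ : E ≃ₜ E := (Homeomorph.mulLeft g).trans (Homeomorph.inv E) with hφdef
  haveI : (π.map ⇑φ).Regular := hπreg.map φ
  have hκeq : π.map ⇑φ = Measure.map (· * g⁻¹) π.inv := by
    rw [Measure.inv_def, Measure.map_map (measurable_mul_const g⁻¹) measurable_inv]
    congr 1
    funext w
    show (g * w)⁻¹ = w⁻¹ * g⁻¹
    exact mul_inv_rev g w
  haveI : (π.map ⇑φ).IsMulLeftInvariant := by
    rw [hκeq]; infer_instance
  haveI : NeZero (π.map ⇑φ) := ⟨by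
    intro h
    apply hπ0
    have h1 : (π.map ⇑φ) Set.univ = 0 := by rw [h]; rfl
    rw [Measure.map_apply φ.continuous.measurable MeasurableSet.univ, Set.preimage_univ] at h1
    exact Measure.measure_univ_eq_zero.1 h1⟩
  haveI : Measure.IsHaarMeasure (π.map ⇑φ) := ⟨⟩
  have h2 : π.inv ≪ π.map ⇑φ :=
    Measure.absolutelyContinuous_isHaarMeasure π.inv (π.map ⇑φ)
  have hD : MeasurableSet ((fun w : E => w⁻¹) ⁻¹' C) := measurable_inv hC
  by_contra hzero
  have hz : π {w | g * w ∈ C} = 0 := le_antisymm (not_lt.1 hzero) zero_le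
  have e1 : (π.map ⇑φ) ((fun w : E => w⁻¹) ⁻¹' C) = π {w | g * w ∈ C} := by
    rw [Measure.map_apply φ.continuous.measurable hD]
    congr 1
    ext w
    simp [hφdef]
  have e2 : π.inv ((fun w : E => w⁻¹) ⁻¹' C) = π C := by
    rw [← inv_map_eq π, Measure.map_apply (Homeomorph.inv E).continuous.measurable hD]
    congr 1
    ext w
    simp
  have h3 : π.inv ((fun w : E => w⁻¹) ⁻¹' C) = 0 := h2 (by rw [e1, hz])
  rw [e2] at h3
  exact hpos.ne' h3

lemma pos_open (π : Measure E) (hπ0 : π ≠ 0) (hπreg : π.Regular)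
    (hπinv : π.IsMulRightInvariant) {V : Set E} (hV : IsOpen V) (hne : V.Nonempty) :
    0 < π V := by
  haveI := hπreg
  haveI := hπinv
  haveI : π.inv.Regular := inv_map_eq π ▸ hπreg.map (Homeomorph.inv E)
  haveI : NeZero π.inv := ⟨by
    intro h
    apply hπ0
    have h1 : π.inv Set.univ = 0 := by rw [h]; rfl
    rw [Measure.inv_apply, Set.inv_univ] at h1
    exact Measure.measure_univ_eq_zero.1 h1⟩
  have hD : MeasurableSet ((fun w : E => w⁻¹) ⁻¹' V) := measurable_inv hV.measurableSet
  have e2 : π.inv ((fun w : E => w⁻¹) ⁻¹' V) = π V := by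
    rw [← inv_map_eq π, Measure.map_apply (Homeomorph.inv E).continuous.measurable hD]
    congr 1
    ext w
    simp
  rw [← e2]
  refine (hV.preimage continuous_inv).measure_pos π.inv ?_
  obtain ⟨x, hx⟩ := hne
  exact ⟨x⁻¹, by simp [hx]⟩

lemma steinhaus (π : Measure E) (hπreg : π.Regular) (hπinv : π.IsMulRightInvariant)
    {R : Set E} (hRc : IsCompact R) (hRm : MeasurableSet R) (hpos : 0 < π R)
    (hfin : π R < ∞) :
    ∃ V : Set E, IsOpen V ∧ (1 : E) ∈ V ∧ ∀ h ∈ V, 0 < π (((· * h⁻¹) ⁻¹' R) ∩ R) := by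
  haveI := hπreg
  haveI := hπinv
  obtain ⟨O, hRO, hOopen, hOlt⟩ := Set.exists_isOpen_lt_of_lt R (π R + π R / 2)
    (ENNReal.lt_add_right hfin.ne (by simp [ENNReal.div_eq_zero_iff, hpos.ne']))
  obtain ⟨V0, hV0nhds, hV0sub⟩ := compact_open_separated_mul_right hRc hOopen hRO
  obtain ⟨V, hVsub, hVopen, h1V⟩ := mem_nhds_iff.1 hV0nhds
  refine ⟨V, hVopen, h1V, fun h hh => ?_⟩
  set Rh : Set E := (· * h⁻¹) ⁻¹' R with hRhdef
  have hπRh : π Rh = π R := measure_preimage_mul_right π h⁻¹ R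
  have hRhsub : Rh ⊆ O := by
    intro z hz
    have : (z * h⁻¹) * h ∈ R * V0 := Set.mul_mem_mul hz (hVsub hh)
    simpa using hV0sub this
  by_contra hc
  have hc0 : π (Rh ∩ R) = 0 := le_antisymm (not_lt.1 hc) zero_le
  have h1 : π R ≤ π (Rh \ R) := by
    calc π R = π Rh := hπRh.symm
      _ = π ((Rh ∩ R) ∪ (Rh \ R)) := by rw [Set.inter_union_diff]
      _ ≤ π (Rh ∩ R) + π (Rh \ R) := measure_union_le _ _
      _ = π (Rh \ R) := by rw [hc0, zero_add]
  have h2 : π (Rh \ R) ≤ π (O \ R) := measure_mono (Set.diff_subset_diff_left hRhsub)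
  have h5 : π (O \ R) + π R = π O := by
    rw [← measure_union disjoint_sdiff_self_left hRm, Set.diff_union_of_subset hRO]
  have h6 : π R + π R ≤ π O := by
    rw [← h5]
    exact add_le_add (le_trans h1 h2) le_rfl
  have h7 : π R + π R < π R + π R / 2 := lt_of_le_of_lt h6 hOlt
  have h8 : π R < π R / 2 := (ENNReal.add_lt_add_iff_left hfin.ne).1 h7
  exact absurd h8 (not_lt.2 ENNReal.half_le_self)

lemma minorization (π : Measure E) (hπ0 : π ≠ 0) (hπreg : π.Regular)
    (hπinv : π.IsMulRightInvariant) (v : Measure E) [IsProbabilityMeasure v]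
    (hspread : ∃ n : ℕ, 1 ≤ n ∧ ¬ (convPow v n).MutuallySingular π) :
    ∃ (U : Set E) (N : ℕ), IsOpen U ∧ U.Nonempty ∧ 1 ≤ N ∧
      ∀ B : Set E, MeasurableSet B → 0 < π (B ∩ U) → 0 < convPow v N B := by
  haveI := hπreg
  haveI := hπinv
  haveI : SigmaFinite π := inferInstance
  obtain ⟨n₀, hn₀, hsing⟩ := hspread
  set ν := convPow v n₀ with hνdef
  haveI : IsProbabilityMeasure ν := convPow_isProbabilityMeasure v n₀
  set f := ν.rnDeriv π with hfdef
  have hfm : Measurable f := Measure.measurable_rnDeriv ν π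
  have hwd : π.withDensity f ≠ 0 := by
    intro h0
    apply hsing
    have hd := (ν.haveLebesgueDecomposition_add π)
    rw [← hfdef, h0, add_zero] at hd
    rw [hd]
    exact Measure.mutuallySingular_singularPart ν π
  have hlpos : 0 < ∫⁻ a, f a ∂π := by
    by_contra hgz
    apply hwd
    rw [← Measure.measure_univ_eq_zero, withDensity_apply _ MeasurableSet.univ,
      setLIntegral_univ]
    exact le_antisymm (not_lt.1 hgz) zero_le
  have hsupp : 0 < π (Function.support f) := (lintegral_pos_iff_support hfm).1 hlpos
  have hsub : Function.support f ⊆ ⋃ n : ℕ, {x | (n : ℝ≥0∞)⁻¹ < f x} := by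
    intro x hx
    obtain ⟨n, hn⟩ := ENNReal.exists_inv_nat_lt (show f x ≠ 0 from hx)
    exact Set.mem_iUnion.2 ⟨n, hn⟩
  have hpos2 : 0 < π (⋃ n : ℕ, {x | (n : ℝ≥0∞)⁻¹ < f x}) :=
    lt_of_lt_of_le hsupp (measure_mono hsub)
  have hex : ∃ n : ℕ, 0 < π {x | (n : ℝ≥0∞)⁻¹ < f x} := by
    by_contra hall
    push_neg at hall
    have h0 := measure_iUnion_null (μ := π) (s := fun n : ℕ => {x | (n : ℝ≥0∞)⁻¹ < f x})
      (fun n => le_antisymm (hall n) zero_le)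
    exact hpos2.ne' h0
  obtain ⟨n₁, hn₁⟩ := hex
  set ε := ((n₁ : ℝ≥0∞))⁻¹ with hεdef
  have hε0 : ε ≠ 0 := by simp [hεdef]
  set A1 := {x | ε < f x} with hA1def
  have hA1m : MeasurableSet A1 := measurableSet_lt measurable_const hfm
  have hA1eq : A1 = ⋃ k, A1 ∩ spanningSets π k := by
    rw [← Set.inter_iUnion, iUnion_spanningSets, Set.inter_univ]
  have hex2 : ∃ k, 0 < π (A1 ∩ spanningSets π k) := by
    by_contra hall
    push_neg at hall
    have h0 := measure_iUnion_null (μ := π) (s := fun k => A1 ∩ spanningSets π k)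
      (fun k => le_antisymm (hall k) zero_le)
    rw [← hA1eq] at h0
    exact hn₁.ne' h0
  obtain ⟨k, hk⟩ := hex2
  set A2 := A1 ∩ spanningSets π k with hA2def
  have hA2m : MeasurableSet A2 := hA1m.inter (measurableSet_spanningSets π k)
  have hA2fin : π A2 ≠ ∞ :=
    (lt_of_le_of_lt (measure_mono Set.inter_subset_right)
      (measure_spanningSets_lt_top π k)).ne
  obtain ⟨P, hPA2, hPc, hPcl, hPlt⟩ := hA2m.exists_isCompact_isClosed_lt_add hA2fin
    (ε := π A2 / 2) (by simp [ENNReal.div_eq_zero_iff, hk.ne'])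
  have hPm : MeasurableSet P := hPcl.measurableSet
  have hPpos : 0 < π P := by
    by_contra hc
    have h0 : π P = 0 := le_antisymm (not_lt.1 hc) zero_le
    rw [h0, zero_add] at hPlt
    exact absurd (lt_of_lt_of_le hPlt ENNReal.half_le_self) (lt_irrefl _)
  have hPfin : π P < ∞ := hPc.measure_lt_top
  have hPf : ∀ x ∈ P, ε < f x := fun x hx => (hPA2 hx).1
  -- fact 1 : ν dominates ε · π restricted to P
  have fact1 : ∀ C : Set E, MeasurableSet C → ε * π (C ∩ P) ≤ ν C := by
    intro C hC
    have h1 : π.withDensity f C ≤ ν C := by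
      conv_rhs => rw [← ν.singularPart_add_rnDeriv π]
      rw [Measure.add_apply]
      exact le_add_self
    refine le_trans ?_ h1
    rw [withDensity_apply _ hC]
    calc ε * π (C ∩ P) = ∫⁻ _ in C ∩ P, ε ∂π := (setLIntegral_const _ _).symm
      _ ≤ ∫⁻ x in C ∩ P, f x ∂π := setLIntegral_mono hfm fun x hx => (hPf x hx.2).le
      _ ≤ ∫⁻ x in C, f x ∂π := lintegral_mono_set Set.inter_subset_left
  haveI : IsFiniteMeasure (π.restrict P) := ⟨by rwa [Measure.restrict_apply_univ]⟩
  set σ : Measure E := ε • π.restrict P with hσdef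
  have hσle : σ ≤ ν := by
    refine Measure.le_iff.2 fun s hs => ?_
    rw [hσdef, Measure.smul_apply, smul_eq_mul, Measure.restrict_apply hs]
    exact fact1 s hs
  set ρ : Measure E := mconv (π.restrict P) (π.restrict P) with hρdef
  have fact2 : ∀ B : Set E, MeasurableSet B → ε * ε * ρ B ≤ convPow v (n₀ + n₀) B := by
    intro B hB
    rw [convPow_add]
    have e : (mconv σ σ) B = ε * ε * ρ B := by
      rw [mconv_apply σ σ hB, mconv_apply (π.restrict P) (π.restrict P) hB, hσdef,
        lintegral_smul_measure]
      simp only [Measure.smul_apply, smul_eq_mul]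
      rw [lintegral_const_mul ε (measurable_mconv_integrand (π.restrict P) hB)]
      ring
    calc ε * ε * ρ B = mconv σ σ B := e.symm
      _ ≤ mconv ν ν B := mconv_mono σ ν σ ν hσle hσle hB
  -- the density of ρ
  set θ : E → ℝ≥0∞ := fun w => π ({z | w * z⁻¹ ∈ P} ∩ P) with hθdef
  have hθmeas : Measurable θ := by
    have hs : MeasurableSet {p : E × E | p.1 * p.2⁻¹ ∈ P} :=
      (measurable_fst.mul measurable_snd.inv) hPm
    have : ∀ w, θ w = (π.restrict P) (Prod.mk w ⁻¹' {p : E × E | p.1 * p.2⁻¹ ∈ P}) := by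
      intro w
      rw [Measure.restrict_apply (measurable_prodMk_left hs)]
      rfl
    rw [show θ = fun w => (π.restrict P) (Prod.mk w ⁻¹' {p : E × E | p.1 * p.2⁻¹ ∈ P})
      from funext this]
    exact measurable_measure_prodMk_left hs
  have fact3 : ∀ B : Set E, MeasurableSet B → ρ B = ∫⁻ w in B, θ w ∂π := by
    intro B hB
    set M : Set (E × E) := {p : E × E | p.1 ∈ P ∧ p.2 ∈ B ∧ p.2 * p.1⁻¹ ∈ P} with hMdef
    have hM : MeasurableSet M := by
      refine (measurable_fst hPm).inter ((measurable_snd hB).inter ?_)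
      exact (measurable_snd.mul measurable_fst.inv) hPm
    have inner : ∀ z : E, (π.restrict P) {y | y * z ∈ B} = π (B ∩ {w | w * z⁻¹ ∈ P}) := by
      intro z
      rw [Measure.restrict_apply (show MeasurableSet {y : E | y * z ∈ B} from
        measurable_mul_const z hB)]
      have hset : {y | y * z ∈ B} ∩ P = (· * z) ⁻¹' (B ∩ {w | w * z⁻¹ ∈ P}) := by
        ext y
        simp only [Set.mem_inter_iff, Set.mem_setOf_eq, Set.mem_preimage]
        constructor
        · rintro ⟨h1, h2⟩
          exact ⟨h1, by simpa using h2⟩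
        · rintro ⟨h1, h2⟩
          exact ⟨h1, by simpa using h2⟩
      rw [hset, measure_preimage_mul_right π z (B ∩ {w | w * z⁻¹ ∈ P})]
    have e1 : ρ B = (π.prod π) M := by
      rw [hρdef, mconv_apply_symm _ _ hB, Measure.prod_apply hM]
      calc ∫⁻ z, (π.restrict P) {y | y * z ∈ B} ∂(π.restrict P)
          = ∫⁻ z in P, π (B ∩ {w | w * z⁻¹ ∈ P}) ∂π := lintegral_congr inner
        _ = ∫⁻ z, P.indicator (fun z => π (B ∩ {w | w * z⁻¹ ∈ P})) z ∂π :=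
            (lintegral_indicator hPm _).symm
        _ = ∫⁻ z, π (Prod.mk z ⁻¹' M) ∂π := by
            refine lintegral_congr fun z => ?_
            by_cases hz : z ∈ P
            · rw [Set.indicator_of_mem hz]
              congr 1
              ext w
              simp [hMdef, hz]
            · rw [Set.indicator_of_notMem hz]
              have hempty : Prod.mk z ⁻¹' M = ∅ := by
                ext w
                simp [hMdef, hz]
              rw [hempty, measure_empty]
    have e2 : (π.prod π) M = ∫⁻ w in B, θ w ∂π := by
      rw [Measure.prod_apply_symm hM, ← lintegral_indicator hB]
      refine lintegral_congr fun w => ?_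
      by_cases hw : w ∈ B
      · rw [Set.indicator_of_mem hw]
        simp only [hθdef]
        congr 1
        ext z
        simp only [hMdef, Set.mem_preimage, Set.mem_setOf_eq, Set.mem_inter_iff, hw, true_and]
        tauto
      · rw [Set.indicator_of_notMem hw]
        have hempty : (fun z => (z, w)) ⁻¹' M = ∅ := by
          ext z
          simp [hMdef, hw]
        rw [hempty, measure_empty]
    rw [e1, e2]
  -- find a point with positive density
  have hρuniv : 0 < ρ Set.univ := by
    rw [hρdef, mconv, Measure.map_apply mul2_measurable MeasurableSet.univ, Set.preimage_univ,
      ← Set.univ_prod_univ, Measure.prod_prod, Measure.restrict_apply_univ]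
    exact ENNReal.mul_pos hPpos.ne' hPpos.ne'
  have hθint : 0 < ∫⁻ w, θ w ∂π := by
    have h := fact3 Set.univ MeasurableSet.univ
    rw [h, Measure.restrict_univ] at hρuniv
    exact hρuniv
  obtain ⟨w₀, hw₀⟩ : ∃ w, 0 < θ w := by
    by_contra hall
    push_neg at hall
    have hzero : ∫⁻ w, θ w ∂π = 0 := by
      have hfun : θ = fun _ => 0 := funext fun w => le_antisymm (hall w) zero_le
      rw [hfun, lintegral_zero]
    exact hθint.ne' hzero
  set R := {z | w₀ * z⁻¹ ∈ P} ∩ P with hRdef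
  have hRcl : IsClosed {z : E | w₀ * z⁻¹ ∈ P} :=
    IsClosed.preimage (continuous_const.mul continuous_inv) hPcl
  have hRc : IsCompact R := hPc.inter_left hRcl
  have hRm : MeasurableSet R := hRcl.measurableSet.inter hPm
  have hRpos : 0 < π R := by
    have : θ w₀ = π R := by simp only [hθdef, hRdef]
    rw [← this]
    exact hw₀
  have hRfin : π R < ∞ := lt_of_le_of_lt (measure_mono Set.inter_subset_right) hPfin
  obtain ⟨V, hVopen, h1V, hV⟩ := steinhaus π hπreg hπinv hRc hRm hRpos hRfin
  set U := (fun w => w₀⁻¹ * w) ⁻¹' V with hUdef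
  have hUopen : IsOpen U := hVopen.preimage (continuous_const.mul continuous_id)
  have hUne : U.Nonempty := ⟨w₀, by simp [hUdef, h1V]⟩
  have hθU : ∀ w ∈ U, 0 < θ w := by
    intro w hw
    have hhV : w₀⁻¹ * w ∈ V := hw
    have hsub2 : ((· * (w₀⁻¹ * w)⁻¹) ⁻¹' R) ∩ R ⊆ {z | w * z⁻¹ ∈ P} ∩ P := by
      rintro z ⟨hz1, hz2⟩
      have hz11 : w₀ * (z * (w₀⁻¹ * w)⁻¹)⁻¹ ∈ P := hz1.1
      refine ⟨?_, hz2.2⟩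
      show w * z⁻¹ ∈ P
      have heq : w₀ * (z * (w₀⁻¹ * w)⁻¹)⁻¹ = w * z⁻¹ := by group
      rwa [heq] at hz11
    refine lt_of_lt_of_le (hV _ hhV) ?_
    have : π ({z | w * z⁻¹ ∈ P} ∩ P) = θ w := by simp only [hθdef]
    rw [← this]
    exact measure_mono hsub2
  refine ⟨U, n₀ + n₀, hUopen, hUne, le_trans hn₀ (Nat.le_add_right _ _), ?_⟩
  intro B hB hBU
  have hρB : 0 < ρ B := by
    have h1 : 0 < ρ (B ∩ U) := by
      rw [fact3 _ (hB.inter hUopen.measurableSet)]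
      refine (lintegral_pos_iff_support hθmeas).2 ?_
      rw [Measure.restrict_apply' (hB.inter hUopen.measurableSet)]
      refine lt_of_lt_of_le hBU (measure_mono ?_)
      intro w hw
      exact ⟨(hθU w hw.2).ne', hw⟩
    exact lt_of_lt_of_le h1 (measure_mono Set.inter_subset_left)
  exact lt_of_lt_of_le (ENNReal.mul_pos (ENNReal.mul_pos hε0 hε0).ne' hρB.ne') (fact2 B hB)

lemma exists_translate (π : Measure E) (hπ0 : π ≠ 0) (hπreg : π.Regular)
    (hπinv : π.IsMulRightInvariant) (κ : Measure E) [SFinite κ]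
    {A : Set E} (hA : MeasurableSet A)
    (hκA : ∀ w : E, 0 < κ ((· * w) ⁻¹' A))
    {V : Set E} (hVopen : IsOpen V) (hVne : V.Nonempty) :
    ∃ z₀ : E, 0 < π (V ∩ {w | z₀ * w ∈ A}) := by
  haveI := hπreg
  haveI := hπinv
  haveI : SigmaFinite π := inferInstance
  set M : Set (E × E) := {p : E × E | p.2 ∈ V ∧ p.1 * p.2 ∈ A} with hMdef
  have hM : MeasurableSet M :=
    (measurable_snd hVopen.measurableSet).inter (mul2_measurable hA)
  have e2 : 0 < (κ.prod π) M := by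
    rw [Measure.prod_apply_symm hM]
    have hgm : Measurable fun w : E => κ ((fun z => (z, w)) ⁻¹' M) :=
      measurable_measure_prodMk_right hM
    refine (lintegral_pos_iff_support hgm).2 ?_
    refine lt_of_lt_of_le (pos_open π hπ0 hπreg hπinv hVopen hVne) (measure_mono ?_)
    intro w hw
    show κ ((fun z => (z, w)) ⁻¹' M) ≠ 0
    have hpre : (fun z => (z, w)) ⁻¹' M = (· * w) ⁻¹' A := by
      ext z
      simp [hMdef, hw]
    rw [hpre]
    exact (hκA w).ne'
  have e1 : (κ.prod π) M = ∫⁻ z, π (V ∩ {w | z * w ∈ A}) ∂κ := by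
    rw [Measure.prod_apply hM]
    exact lintegral_congr fun z => rfl
  rw [e1] at e2
  by_contra hall
  push_neg at hall
  have hzero : ∫⁻ z, π (V ∩ {w | z * w ∈ A}) ∂κ = 0 := by
    have hfun : (fun z => π (V ∩ {w | z * w ∈ A})) = fun _ => 0 :=
      funext fun z => le_antisymm (hall z) zero_le
    rw [hfun, lintegral_zero]
  exact e2.ne' hzero

lemma key_irreducible (π : Measure E) (hπ0 : π ≠ 0) (hπreg : π.Regular)
    (hπinv : π.IsMulRightInvariant) (v : Measure E) [IsProbabilityMeasure v]
    (hspread : ∃ n : ℕ, 1 ≤ n ∧ ¬ (convPow v n).MutuallySingular π)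
    (hirr : IsIrreducibleWalk v) (κ : Measure E) [SFinite κ]
    (hκtrans : ∀ {A : Set E}, MeasurableSet A → 0 < κ A → ∀ w : E, 0 < κ ((· * w) ⁻¹' A)) :
    IsMeasIrreducible κ v := by
  obtain ⟨U, N, hUopen, hUne, hN1, hMIN⟩ := minorization π hπ0 hπreg hπinv v hspread
  intro x A hA hposA
  obtain ⟨u₀, hu₀⟩ := hUne
  obtain ⟨W, V', hWopen, hV'open, h1W, hu₀V', hWV'⟩ :=
    isOpen_prod_iff.1 (hUopen.preimage (continuous_mul (M := E))) 1 u₀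
      (by simpa using hu₀)
  obtain ⟨z₀, hz₀⟩ := exists_translate π hπ0 hπreg hπinv κ hA (hκtrans hA hposA)
    hV'open ⟨u₀, hu₀V'⟩
  set O' := (fun z' => z'⁻¹ * z₀) ⁻¹' W with hO'def
  have hO'open : IsOpen O' := hWopen.preimage (continuous_inv.mul continuous_const)
  have hz₀O' : z₀ ∈ O' := by
    show z₀⁻¹ * z₀ ∈ W
    simpa using h1W
  have hO' : ∀ z' ∈ O', 0 < π ({b | z' * b ∈ A} ∩ U) := by
    intro z' hz'
    have hhW : z'⁻¹ * z₀ ∈ W := hz'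
    have hsub : {w | (z'⁻¹ * z₀)⁻¹ * w ∈ V' ∩ {u | z₀ * u ∈ A}} ⊆ {b | z' * b ∈ A} ∩ U := by
      intro w hw
      obtain ⟨hw1, hw2⟩ := hw
      constructor
      · show z' * w ∈ A
        have heq : z' * w = z₀ * ((z'⁻¹ * z₀)⁻¹ * w) := by group
        rw [heq]
        exact hw2
      · have heq : w = (z'⁻¹ * z₀) * ((z'⁻¹ * z₀)⁻¹ * w) := by group
        rw [heq]
        exact hWV' (Set.mk_mem_prod hhW hw1)
    have hqi := qi π hπ0 hπreg hπinv (z'⁻¹ * z₀)⁻¹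
      (hV'open.measurableSet.inter (measurable_const_mul z₀ hA)) hz₀
    exact lt_of_lt_of_le hqi (measure_mono hsub)
  have hOx : IsOpen ((fun y => x * y) ⁻¹' O') :=
    hO'open.preimage (continuous_const.mul continuous_id)
  have hOxne : ((fun y => x * y) ⁻¹' O').Nonempty := by
    refine ⟨x⁻¹ * z₀, ?_⟩
    show x * (x⁻¹ * z₀) ∈ O'
    simpa using hz₀O'
  obtain ⟨m, hm1, hmpos⟩ := reach_open v hirr hOx hOxne
  refine ⟨m + N, le_trans hm1 (Nat.le_add_right _ _), ?_⟩
  have hBx : MeasurableSet {y : E | x * y ∈ A} := measurable_const_mul x hA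
  rw [convPow_add v m N, mconv_apply _ _ hBx]
  have hintm : Measurable fun y : E => convPow v N {b | y * b ∈ {y : E | x * y ∈ A}} :=
    measurable_mconv_integrand _ hBx
  refine (lintegral_pos_iff_support hintm).2 ?_
  refine lt_of_lt_of_le hmpos (measure_mono ?_)
  intro y hy
  show convPow v N {b | y * b ∈ {y : E | x * y ∈ A}} ≠ 0
  have hset : {b | y * b ∈ {y : E | x * y ∈ A}} = {b | (x * y) * b ∈ A} := by
    ext b
    simp [mul_assoc]
  rw [hset]
  exact (hMIN {b | (x * y) * b ∈ A} (measurable_const_mul (x * y) hA) (hO' (x * y) hy)).ne'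

lemma maximality (π : Measure E) (hπ0 : π ≠ 0) (hπreg : π.Regular)
    (hπinv : π.IsMulRightInvariant) (v : Measure E) [IsProbabilityMeasure v]
    (μ : Measure E) (hμirr : IsMeasIrreducible μ v) : μ ≪ π := by
  haveI := hπreg
  haveI := hπinv
  haveI : SigmaFinite π := inferInstance
  intro s hs
  obtain ⟨t, hst, htm, hts⟩ := exists_measurable_superset_of_null hs
  refine measure_mono_null hst ?_
  by_contra hms
  have hpost : 0 < μ t := pos_iff_ne_zero.2 hms
  have hnull : ∀ n : ℕ, ∀ᵐ x ∂π, convPow v n {y | x * y ∈ t} = 0 := by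
    intro n
    haveI : IsProbabilityMeasure (convPow v n) := convPow_isProbabilityMeasure v n
    have hm : Measurable fun x : E => convPow v n {y | x * y ∈ t} :=
      measurable_mconv_integrand _ htm
    have hint : ∫⁻ x, convPow v n {y | x * y ∈ t} ∂π = 0 := by
      have hMs : MeasurableSet {p : E × E | p.1 * p.2 ∈ t} := mul2_measurable htm
      have h1 : ∫⁻ x, convPow v n {y | x * y ∈ t} ∂π
          = (π.prod (convPow v n)) {p : E × E | p.1 * p.2 ∈ t} := by
        rw [Measure.prod_apply hMs]
        rfl
      have h2 : (π.prod (convPow v n)) {p : E × E | p.1 * p.2 ∈ t}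
          = ∫⁻ y, π ((· * y) ⁻¹' t) ∂(convPow v n) := by
        rw [Measure.prod_apply_symm hMs]
        rfl
      rw [h1, h2]
      have h3 : ∀ y : E, π ((· * y) ⁻¹' t) = 0 := by
        intro y
        rw [measure_preimage_mul_right π y t]
        exact hts
      simp only [h3, lintegral_zero]
    exact (lintegral_eq_zero_iff hm).1 hint
  have hae : ∀ᵐ x ∂π, ∀ n : ℕ, convPow v n {y | x * y ∈ t} = 0 := ae_all_iff.2 hnull
  haveI : (ae π).NeBot := ae_neBot.2 hπ0
  obtain ⟨x₀, hx₀⟩ := hae.exists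
  obtain ⟨n, hn1, hnpos⟩ := hμirr x₀ t htm hpost
  exact hnpos.ne' (hx₀ n)

end Aux

theorem haar_is_maximal_irreducibility_measure
    {E : Type*} [TopologicalSpace E] [Group E] [IsTopologicalGroup E]
    [LocallyCompactSpace E] [SecondCountableTopology E]
    [MeasurableSpace E] [BorelSpace E]
    (π : Measure E) (hπ0 : π ≠ 0) (hπreg : π.Regular)
    (hπinv : π.IsMulRightInvariant)
    (v : Measure E) [IsProbabilityMeasure v]
    (hspread : ∃ n : ℕ, 1 ≤ n ∧ ¬ (convPow v n).MutuallySingular π)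
    (hirr : IsIrreducibleWalk v) :
    IsMeasIrreducible π v ∧
      IsMeasIrreducible (Measure.map (fun x => x⁻¹) π) v ∧
      ∀ μ : Measure E, μ ≠ 0 → SigmaFinite μ → IsMeasIrreducible μ v → μ ≪ π := by
  haveI := hπreg
  haveI := hπinv
  haveI : SigmaFinite π := inferInstance
  refine ⟨?_, ?_, ?_⟩
  · refine key_irreducible π hπ0 hπreg hπinv v hspread hirr π ?_
    intro A hA hApos w
    rw [measure_preimage_mul_right π w A]
    exact hApos
  · have hmap : Measure.map (fun x : E => x⁻¹) π = π.inv := rfl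
    rw [hmap]
    refine key_irreducible π hπ0 hπreg hπinv v hspread hirr π.inv ?_
    intro A hA hApos w
    have hD : MeasurableSet (A⁻¹ : Set E) := hA.inv
    have hApos' : 0 < π (A⁻¹ : Set E) := by rwa [Measure.inv_apply] at hApos
    have hqi := qi π hπ0 hπreg hπinv w⁻¹ hD hApos'
    have e : π.inv ((· * w) ⁻¹' A) = π {z | w⁻¹ * z ∈ (A⁻¹ : Set E)} := by
      rw [Measure.inv_apply]
      congr 1
      ext z
      simp [Set.mem_inv, mul_inv_rev]
    rw [e]
    exact hqi
  · intro μ hμ0 hSF hμirr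
    exact maximality π hπ0 hπreg hπinv v μ hμirr
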